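/- Let ω be a code tree with first neck level N = N_1(ω) < ∞, at most M maps at each node, and linear parts with singular values in [σ̲, σ̄] ⊂ (0,1). Then for every s ≥ 0 and n ∈ ℕ, (σ̲^s)^N · M^s_n(Σ^{Ξω}) ≤ M^s_{N+n}(Σ^ω) ≤ (M σ̄^s)^N · M^s_n(Σ^{Ξω}), where M^s_j denotes the j-th stage net premeasure and Ξω is the shifted code tree. Consequently M^s(Σ^ω) > 0 if and only if M^s(Σ^{Ξω}) > 0, so the set E(s) = {ω : M^s(Σ^ω) > 0} is Ξ-invariant. -/

import Mathlib

/-- The singular values of a real `d × d` matrix, in decreasing order: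
`singVals A 0 ≥ singVals A 1 ≥ ⋯`. They are the square roots of the
eigenvalues of `Aᴴ * A`, sorted decreasingly. -/
noncomputable def singVals {d : ℕ} (A : Matrix (Fin d) (Fin d) ℝ) : Fin d → ℝ :=
  fun i =>
    let f : Fin d → ℝ :=
      fun j => Real.sqrt ((Matrix.isHermitian_conjTranspose_mul_self A).eigenvalues j)
    (f ∘ Tuple.sort f) i.rev

/-- The singular value function `Φ^s(A) = σ_1 ⋯ σ_{m-1} · σ_m^{s-m+1}` for
`m - 1 ≤ s < m ≤ d`, and `Φ^s(A) = σ_1 ⋯ σ_{d-1} · σ_d^{s-d+1}` for `s ≥ d`. -/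
noncomputable def svf {d : ℕ} (A : Matrix (Fin d) (Fin d) ℝ) (s : ℝ) : ℝ :=
  let σ : ℕ → ℝ := fun i => if h : i < d then singVals A ⟨i, h⟩ else 1
  let m : ℕ := min d (⌊s⌋₊ + 1)
  (∏ i ∈ Finset.range (m - 1), σ i) * σ (m - 1) ^ (s - ((m : ℝ) - 1))

/-- The cylinder of a finite word `w`: all infinite sequences extending `w`. -/
def cyl {I : Type*} (w : List I) : Set (ℕ → I) :=
  {x | ∀ n, (h : n < w.length) → x n = w.get ⟨n, h⟩}

/-- The product `T_{i_1} T_{i_2} ⋯ T_{i_k}` of the linear parts along the word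
`w = i_1 ⋯ i_k` of a code tree whose edge matrices are given by `A`. -/
noncomputable def Tprod {M d : ℕ}
    (A : List (Fin M) → Fin M → Matrix (Fin d) (Fin d) ℝ)
    (w : List (Fin M)) : Matrix (Fin d) (Fin d) ℝ :=
  (w.foldl (fun p i => (p.1 ++ [i], p.2 * A p.1 i))
    (([] : List (Fin M)), (1 : Matrix (Fin d) (Fin d) ℝ))).2

/-- A code tree with a neck list: `alive` is the tree `Σ_*` of words (with at
most `M` children per node), `A w i` is the linear part of the map indexed by
`i` at the node `w`, and `N` is the neck list (with the convention `N 0 = 0`,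
the necks being `N 1 < N 2 < ⋯`). -/
structure CodeTree (M d : ℕ) where
  alive : List (Fin M) → Prop
  alive_nil : alive []
  alive_pre : ∀ w i, alive (w ++ [i]) → alive w
  A : List (Fin M) → Fin M → Matrix (Fin d) (Fin d) ℝ
  N : ℕ → ℕ
  N_zero : N 0 = 0
  N_mono : StrictMono N
  neck : ∀ m, 1 ≤ m → ∀ w w', alive w → alive w' →
    w.length = N m → w'.length = N m →
    ∀ v, (alive (w ++ v) ↔ alive (w' ++ v)) ∧ A (w ++ v) = A (w' ++ v)

/-- `ω'` is the shift `Ξω` of `ω`: its tree is the subtree of `ω` rooted at any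
(equivalently, by the neck property, some) alive word of length `N 1`, and its
neck list is `m ↦ N (m+1) - N 1`. -/
def IsShiftOf {M d : ℕ} (ω' ω : CodeTree M d) : Prop :=
  (∀ m, ω'.N m = ω.N (m + 1) - ω.N 1) ∧
  ∃ w0, ω.alive w0 ∧ w0.length = ω.N 1 ∧
    (∀ v, (ω'.alive v ↔ ω.alive (w0 ++ v))) ∧
    (∀ v, ω'.A v = ω.A (w0 ++ v))

/-- The code space `Σ^ω` of all infinite branches of the tree. -/
def codeSpace {M d : ℕ} (ω : CodeTree M d) : Set (ℕ → Fin M) :=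
  {x | ∀ n : ℕ, ω.alive (List.ofFn fun k : Fin n => x k)}

/-- The `j`-th stage net premeasure `M^s_j(E)` of the code tree `ω`: infimum of
`∑ Φ^s(T^ω_w)` over covers of `E` by cylinders of alive words of length `≥ j`. -/
noncomputable def stage {M d : ℕ} (ω : CodeTree M d) (s : ℝ) (j : ℕ)
    (E : Set (ℕ → Fin M)) : ENNReal :=
  ⨅ (J : Set (List (Fin M))) (_ : ∀ w ∈ J, ω.alive w ∧ j ≤ w.length)
    (_ : E ⊆ ⋃ w ∈ J, cyl w),
    ∑' w : J, ENNReal.ofReal (svf (Tprod ω.A w) s)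

/-- The net measure `M^s(Σ^ω)`. -/
noncomputable def netM {M d : ℕ} (ω : CodeTree M d) (s : ℝ) : ENNReal :=
  ⨆ j : ℕ, stage ω s j (codeSpace ω)

section Spectral
open Matrix RealInnerProductSpace

variable {d : ℕ}

lemma dot_sum' {m : ℕ} (x : Fin d → ℝ) (f : Fin m → Fin d → ℝ) :
    x ⬝ᵥ (∑ j, f j) = ∑ j, x ⬝ᵥ f j := by
  simp [dotProduct, Finset.sum_apply, Finset.mul_sum]
  rw [Finset.sum_comm]

lemma mulVec_sum' {m : ℕ} (H : Matrix (Fin d) (Fin d) ℝ) (f : Fin m → Fin d → ℝ) :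
    H *ᵥ (∑ j, f j) = ∑ j, H *ᵥ f j := by
  simp only [← Matrix.mulVecLin_apply, map_sum]

lemma dot_eq_inner (x y : EuclideanSpace ℝ (Fin d)) : dotProduct x y = ⟪x, y⟫ := by
  simp [PiLp.inner_apply, dotProduct, mul_comm]

lemma quad_expand (H : Matrix (Fin d) (Fin d) ℝ) (hH : H.IsHermitian)
    (x : EuclideanSpace ℝ (Fin d)) :
    x ⬝ᵥ (H *ᵥ x) = ∑ j, hH.eigenvalues j * (⟪hH.eigenvectorBasis j, x⟫)^2 := by
  set e := hH.eigenvectorBasis with he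
  have hx : (x : Fin d → ℝ) = ∑ j, ⟪e j, x⟫ • (e j : Fin d → ℝ) := by
    have h1 := e.sum_repr' x
    calc (x : Fin d → ℝ) = ((∑ j, ⟪e j, x⟫ • e j : EuclideanSpace ℝ (Fin d)) : Fin d → ℝ) := by
          rw [h1]
      _ = ∑ j, ⟪e j, x⟫ • (e j : Fin d → ℝ) := by
          simp only [WithLp.ofLp_sum, WithLp.ofLp_smul]
  have hmv : H *ᵥ x = ∑ j, (⟪e j, x⟫ * hH.eigenvalues j) • (e j : Fin d → ℝ) := by
    conv_lhs => rw [hx]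
    rw [mulVec_sum']
    refine Finset.sum_congr rfl fun j _ => ?_
    have h2 : H *ᵥ (e j : Fin d → ℝ) = hH.eigenvalues j • (e j : Fin d → ℝ) :=
      hH.mulVec_eigenvectorBasis j
    rw [mulVec_smul, h2, smul_smul, mul_comm]
  rw [hmv, dot_sum']
  refine Finset.sum_congr rfl fun j _ => ?_
  rw [dotProduct_smul]
  have h3 : x ⬝ᵥ (e j : Fin d → ℝ) = ⟪e j, x⟫ := by
    rw [dot_eq_inner x (e j), real_inner_comm]
  rw [smul_eq_mul, h3]; ring

/-- The sorting permutation used in `singVals`. -/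
noncomputable def sPerm (B : Matrix (Fin d) (Fin d) ℝ) : Equiv.Perm (Fin d) :=
  (Fin.revPerm).trans (Tuple.sort (fun j =>
    Real.sqrt ((Matrix.isHermitian_conjTranspose_mul_self B).eigenvalues j)))

lemma singVals_eq (B : Matrix (Fin d) (Fin d) ℝ) (i : Fin d) :
    singVals B i =
      Real.sqrt ((Matrix.isHermitian_conjTranspose_mul_self B).eigenvalues (sPerm B i)) := rfl

lemma singVals_nonneg (B : Matrix (Fin d) (Fin d) ℝ) (i : Fin d) : 0 ≤ singVals B i :=
  Real.sqrt_nonneg _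

lemma singVals_sq (B : Matrix (Fin d) (Fin d) ℝ) (i : Fin d) :
    (singVals B i)^2 =
      (Matrix.isHermitian_conjTranspose_mul_self B).eigenvalues (sPerm B i) := by
  rw [singVals_eq, Real.sq_sqrt]
  exact (Matrix.posSemidef_conjTranspose_mul_self B).eigenvalues_nonneg _

lemma singVals_antitone (B : Matrix (Fin d) (Fin d) ℝ) {i j : Fin d} (hij : i ≤ j) :
    singVals B j ≤ singVals B i := by
  have := Tuple.monotone_sort (fun j =>
    Real.sqrt ((Matrix.isHermitian_conjTranspose_mul_self B).eigenvalues j))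
  exact this (Fin.rev_le_rev.2 hij)

/-- Orthonormal basis adapted to `singVals`. -/
noncomputable def sBasis (B : Matrix (Fin d) (Fin d) ℝ) :
    OrthonormalBasis (Fin d) ℝ (EuclideanSpace ℝ (Fin d)) :=
  (Matrix.isHermitian_conjTranspose_mul_self B).eigenvectorBasis.reindex (sPerm B).symm

lemma sBasis_apply (B : Matrix (Fin d) (Fin d) ℝ) (i : Fin d) :
    sBasis B i = (Matrix.isHermitian_conjTranspose_mul_self B).eigenvectorBasis (sPerm B i) := by
  simp [sBasis, OrthonormalBasis.reindex_apply]

lemma norm_mulVec_expand (B : Matrix (Fin d) (Fin d) ℝ) (x : EuclideanSpace ℝ (Fin d)) :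
    (B *ᵥ x) ⬝ᵥ (B *ᵥ x) = ∑ j, (singVals B j)^2 * (⟪sBasis B j, x⟫)^2 := by
  have h0 : (B *ᵥ x) ⬝ᵥ (B *ᵥ x) = x ⬝ᵥ ((Bᴴ * B) *ᵥ x) := by
    rw [← mulVec_mulVec, dotProduct_mulVec x, conjTranspose_eq_transpose_of_trivial,
      vecMul_transpose]
  rw [h0, quad_expand _ (Matrix.isHermitian_conjTranspose_mul_self B)]
  rw [← Equiv.sum_comp (sPerm B) (fun j =>
    (Matrix.isHermitian_conjTranspose_mul_self B).eigenvalues j *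
      (⟪(Matrix.isHermitian_conjTranspose_mul_self B).eigenvectorBasis j, x⟫)^2)]
  refine Finset.sum_congr rfl fun j _ => ?_
  rw [singVals_sq, sBasis_apply]

lemma parseval (b : OrthonormalBasis (Fin d) ℝ (EuclideanSpace ℝ (Fin d)))
    (x : EuclideanSpace ℝ (Fin d)) : ∑ j, (⟪b j, x⟫)^2 = x ⬝ᵥ x := by
  rw [dot_eq_inner x x, ← OrthonormalBasis.sum_inner_mul_inner b x x]
  refine Finset.sum_congr rfl fun j _ => ?_
  rw [real_inner_comm x (b j)]; ring

end Spectral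
section Compare
open Matrix RealInnerProductSpace

variable {d : ℕ}

lemma exists_common (u v : Fin d → EuclideanSpace ℝ (Fin d)) (i : Fin d) :
    ∃ x : EuclideanSpace ℝ (Fin d), x ≠ 0 ∧ (∀ j, i < j → ⟪u j, x⟫ = 0) ∧
      (∀ j, j < i → ⟪v j, x⟫ = 0) := by
  classical
  let K1 : Submodule ℝ (EuclideanSpace ℝ (Fin d)) :=
    Submodule.span ℝ (((Finset.Ioi i).image u : Finset _) : Set (EuclideanSpace ℝ (Fin d)))
  let K2 : Submodule ℝ (EuclideanSpace ℝ (Fin d)) :=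
    Submodule.span ℝ (((Finset.Iio i).image v : Finset _) : Set (EuclideanSpace ℝ (Fin d)))
  have hdim : Module.finrank ℝ (EuclideanSpace ℝ (Fin d)) = d := finrank_euclideanSpace_fin
  have hVle : Module.finrank ℝ K1 ≤ d - 1 - i := by
    refine le_trans (finrank_span_finset_le_card _) (le_trans Finset.card_image_le ?_)
    rw [Fin.card_Ioi]
  have hWle : Module.finrank ℝ K2 ≤ (i : ℕ) := by
    refine le_trans (finrank_span_finset_le_card _) (le_trans Finset.card_image_le ?_)
    rw [Fin.card_Iio]
  have hVr := Submodule.finrank_add_finrank_orthogonal K1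
  have hWr := Submodule.finrank_add_finrank_orthogonal K2
  rw [hdim] at hVr hWr
  have hsup := Submodule.finrank_le (K1ᗮ ⊔ K2ᗮ : Submodule ℝ (EuclideanSpace ℝ (Fin d)))
  have hinf : 0 < Module.finrank ℝ (K1ᗮ ⊓ K2ᗮ : Submodule ℝ (EuclideanSpace ℝ (Fin d))) := by
    have h2 := Submodule.finrank_sup_add_finrank_inf_eq K1ᗮ K2ᗮ
    have hi : (i : ℕ) < d := i.isLt
    omega
  obtain ⟨⟨x, hxVW⟩, hx0⟩ := Module.finrank_pos_iff_exists_ne_zero.1 hinf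
  have hx0' : x ≠ 0 := fun h => hx0 (Subtype.ext h)
  refine ⟨x, hx0', fun j hj => ?_, fun j hj => ?_⟩
  · exact (Submodule.mem_orthogonal K1 x).1 (Submodule.mem_inf.1 hxVW).1 _
      (Submodule.subset_span (by
        simp only [Finset.coe_image, Set.mem_image]
        exact ⟨j, by simpa using hj, rfl⟩))
  · exact (Submodule.mem_orthogonal K2 x).1 (Submodule.mem_inf.1 hxVW).2 _
      (Submodule.subset_span (by
        simp only [Finset.coe_image, Set.mem_image]
        exact ⟨j, by simpa using hj, rfl⟩))

lemma singVals_le_of_quad (B C : Matrix (Fin d) (Fin d) ℝ) (b : ℝ) (hb : 0 ≤ b)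
    (h : ∀ x : Fin d → ℝ, (C *ᵥ x) ⬝ᵥ (C *ᵥ x) ≤ b^2 * ((B *ᵥ x) ⬝ᵥ (B *ᵥ x)))
    (i : Fin d) : singVals C i ≤ b * singVals B i := by
  obtain ⟨x, hx0, hu, hv⟩ := exists_common (sBasis C) (sBasis B) i
  have hn : 0 < x ⬝ᵥ x := by
    rw [dot_eq_inner x x]
    refine lt_of_le_of_ne real_inner_self_nonneg fun h => hx0 ?_
    exact (@inner_self_eq_zero ℝ _ _ _ _ x).1 h.symm
  have hC : (singVals C i)^2 * (x ⬝ᵥ x) ≤ (C *ᵥ x) ⬝ᵥ (C *ᵥ x) := by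
    rw [norm_mulVec_expand C x, ← parseval (sBasis C) x, Finset.mul_sum]
    refine Finset.sum_le_sum fun j _ => ?_
    rcases le_or_gt j i with hj | hj
    · refine mul_le_mul_of_nonneg_right ?_ (sq_nonneg _)
      exact pow_le_pow_left₀ (singVals_nonneg C i) (singVals_antitone C hj) 2
    · rw [hu j hj]
      simp
  have hB : (B *ᵥ x) ⬝ᵥ (B *ᵥ x) ≤ (singVals B i)^2 * (x ⬝ᵥ x) := by
    rw [norm_mulVec_expand B x, ← parseval (sBasis B) x, Finset.mul_sum]
    refine Finset.sum_le_sum fun j _ => ?_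
    rcases lt_or_ge j i with hj | hj
    · rw [hv j hj]
      simp
    · refine mul_le_mul_of_nonneg_right ?_ (sq_nonneg _)
      exact pow_le_pow_left₀ (singVals_nonneg B j) (singVals_antitone B hj) 2
  have hchain : (singVals C i)^2 * (x ⬝ᵥ x) ≤ (b * singVals B i)^2 * (x ⬝ᵥ x) := by
    calc (singVals C i)^2 * (x ⬝ᵥ x) ≤ (C *ᵥ x) ⬝ᵥ (C *ᵥ x) := hC
      _ ≤ b^2 * ((B *ᵥ x) ⬝ᵥ (B *ᵥ x)) := h x
      _ ≤ b^2 * ((singVals B i)^2 * (x ⬝ᵥ x)) :=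
          mul_le_mul_of_nonneg_left hB (sq_nonneg b)
      _ = (b * singVals B i)^2 * (x ⬝ᵥ x) := by ring
  have hsq : (singVals C i)^2 ≤ (b * singVals B i)^2 :=
    le_of_mul_le_mul_right hchain hn
  calc singVals C i = Real.sqrt ((singVals C i)^2) :=
        (Real.sqrt_sq (singVals_nonneg C i)).symm
    _ ≤ Real.sqrt ((b * singVals B i)^2) := Real.sqrt_le_sqrt hsq
    _ = b * singVals B i := Real.sqrt_sq (mul_nonneg hb (singVals_nonneg B i))

lemma le_singVals_of_quad (B C : Matrix (Fin d) (Fin d) ℝ) (a : ℝ) (ha : 0 < a)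
    (h : ∀ x : Fin d → ℝ, a^2 * ((B *ᵥ x) ⬝ᵥ (B *ᵥ x)) ≤ (C *ᵥ x) ⬝ᵥ (C *ᵥ x))
    (i : Fin d) : a * singVals B i ≤ singVals C i := by
  have := singVals_le_of_quad C B a⁻¹ (by positivity) (fun x => by
    rw [inv_pow, le_inv_mul_iff₀ (by positivity : (0:ℝ) < a^2)]
    exact h x) i
  calc a * singVals B i ≤ a * (a⁻¹ * singVals C i) :=
        mul_le_mul_of_nonneg_left this (le_of_lt ha)
    _ = singVals C i := by field_simp

end Compare
section SvfBounds
open Matrix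

variable {d : ℕ}

/-- `A` expands norms by a factor within `[a, b]`. -/
def QBounded (A : Matrix (Fin d) (Fin d) ℝ) (a b : ℝ) : Prop :=
  ∀ x : Fin d → ℝ, a^2 * (x ⬝ᵥ x) ≤ (A *ᵥ x) ⬝ᵥ (A *ᵥ x) ∧
    (A *ᵥ x) ⬝ᵥ (A *ᵥ x) ≤ b^2 * (x ⬝ᵥ x)

lemma qBounded_of_singVals (A : Matrix (Fin d) (Fin d) ℝ) {a b : ℝ}
    (ha : 0 ≤ a) (hb : 0 ≤ b)
    (h : ∀ j, a ≤ singVals A j ∧ singVals A j ≤ b) : QBounded A a b := by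
  intro x
  have hexp := norm_mulVec_expand A (WithLp.toLp 2 x)
  have hp := parseval (sBasis A) (WithLp.toLp 2 x)
  simp only [WithLp.ofLp_toLp] at hexp hp
  constructor
  · rw [hexp, ← hp, Finset.mul_sum]
    refine Finset.sum_le_sum fun j _ => ?_
    exact mul_le_mul_of_nonneg_right (pow_le_pow_left₀ ha (h j).1 2) (sq_nonneg _)
  · rw [hexp, ← hp, Finset.mul_sum]
    refine Finset.sum_le_sum fun j _ => ?_
    exact mul_le_mul_of_nonneg_right
      (pow_le_pow_left₀ (singVals_nonneg A j) (h j).2 2) (sq_nonneg _)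

lemma QBounded.mul {A B : Matrix (Fin d) (Fin d) ℝ} {a b a' b' : ℝ}
    (hA : QBounded A a b) (hB : QBounded B a' b') (ha : 0 ≤ a) (hb' : 0 ≤ b') :
    QBounded (A * B) (a * a') (b * b') := by
  intro x
  obtain ⟨h1, h2⟩ := hA (B *ᵥ x)
  obtain ⟨h3, h4⟩ := hB x
  rw [← mulVec_mulVec]
  constructor
  · calc (a * a')^2 * (x ⬝ᵥ x) = a^2 * (a'^2 * (x ⬝ᵥ x)) := by ring
      _ ≤ a^2 * ((B *ᵥ x) ⬝ᵥ (B *ᵥ x)) := mul_le_mul_of_nonneg_left h3 (sq_nonneg a)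
      _ ≤ (A *ᵥ (B *ᵥ x)) ⬝ᵥ (A *ᵥ (B *ᵥ x)) := h1
  · calc (A *ᵥ (B *ᵥ x)) ⬝ᵥ (A *ᵥ (B *ᵥ x)) ≤ b^2 * ((B *ᵥ x) ⬝ᵥ (B *ᵥ x)) := h2
      _ ≤ b^2 * (b'^2 * (x ⬝ᵥ x)) := mul_le_mul_of_nonneg_left h4 (sq_nonneg b)
      _ = (b * b')^2 * (x ⬝ᵥ x) := by ring

lemma QBounded.one : QBounded (1 : Matrix (Fin d) (Fin d) ℝ) 1 1 := by
  intro x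
  rw [Matrix.one_mulVec]
  simp

lemma svf_nonneg (A : Matrix (Fin d) (Fin d) ℝ) (s : ℝ) : 0 ≤ svf A s := by
  rw [svf]
  refine mul_nonneg (Finset.prod_nonneg fun i _ => ?_) (Real.rpow_nonneg ?_ _)
  · split
    · exact singVals_nonneg A _
    · norm_num
  · dsimp only; split
    · exact singVals_nonneg A _
    · norm_num

lemma svf_le_mul (hd : 0 < d) (B C : Matrix (Fin d) (Fin d) ℝ) {b s : ℝ}
    (hb : 0 < b) (hs : 0 ≤ s)
    (h : ∀ i, singVals C i ≤ b * singVals B i) :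
    svf C s ≤ b ^ s * svf B s := by
  rw [svf, svf]
  dsimp only
  set m := min d (⌊s⌋₊ + 1) with hm
  have hm1 : 1 ≤ m := le_min hd (Nat.succ_le_succ (Nat.zero_le _))
  have hmd : m ≤ d := min_le_left _ _
  have hmlt : m - 1 < d := by omega
  have hms : ((m : ℝ) - 1) ≤ s := by
    have h1 : (m : ℝ) ≤ (⌊s⌋₊ + 1 : ℕ) := by
      exact_mod_cast min_le_right d (⌊s⌋₊ + 1)
    have h2 : ((⌊s⌋₊ : ℝ)) ≤ s := Nat.floor_le hs
    push_cast at h1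
    linarith
  have ht : 0 ≤ s - ((m : ℝ) - 1) := by linarith
  have hlt : ∀ i ∈ Finset.range (m - 1), i < d := fun i hi => by
    have := Finset.mem_range.1 hi; omega
  -- rewrite the dite's
  have hσ : ∀ i (hi : i < d),
      (if h : i < d then singVals C ⟨i, h⟩ else 1) = singVals C ⟨i, hi⟩ :=
    fun i hi => dif_pos hi
  have hprod : (∏ i ∈ Finset.range (m - 1), if h : i < d then singVals C ⟨i, h⟩ else 1)
      ≤ b ^ (m - 1) * ∏ i ∈ Finset.range (m - 1), if h : i < d then singVals B ⟨i, h⟩ else 1 := by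
    have : (b ^ (m - 1) : ℝ) = ∏ _i ∈ Finset.range (m - 1), b := by
      rw [Finset.prod_const, Finset.card_range]
    rw [this, ← Finset.prod_mul_distrib]
    refine Finset.prod_le_prod (fun i hi => ?_) (fun i hi => ?_)
    · rw [dif_pos (hlt i hi)]; exact singVals_nonneg C _
    · rw [dif_pos (hlt i hi), dif_pos (hlt i hi)]; exact h _
  have hrpow : ((if h : m - 1 < d then singVals C ⟨m - 1, h⟩ else 1) ^ (s - ((m : ℝ) - 1)))
      ≤ b ^ (s - ((m : ℝ) - 1)) *
        (if h : m - 1 < d then singVals B ⟨m - 1, h⟩ else 1) ^ (s - ((m : ℝ) - 1)) := by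
    rw [dif_pos hmlt, dif_pos hmlt, ← Real.mul_rpow (le_of_lt hb) (singVals_nonneg B _)]
    exact Real.rpow_le_rpow (singVals_nonneg C _) (h _) ht
  calc (∏ i ∈ Finset.range (m - 1), if h : i < d then singVals C ⟨i, h⟩ else 1) *
        (if h : m - 1 < d then singVals C ⟨m - 1, h⟩ else 1) ^ (s - ((m : ℝ) - 1))
      ≤ (b ^ (m - 1) * ∏ i ∈ Finset.range (m - 1), if h : i < d then singVals B ⟨i, h⟩ else 1) *
        (b ^ (s - ((m : ℝ) - 1)) *
          (if h : m - 1 < d then singVals B ⟨m - 1, h⟩ else 1) ^ (s - ((m : ℝ) - 1))) := by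
        refine mul_le_mul hprod hrpow (Real.rpow_nonneg ?_ _) ?_
        · rw [dif_pos hmlt]; exact singVals_nonneg C _
        · refine mul_nonneg (pow_nonneg (le_of_lt hb) _) ?_
          refine Finset.prod_nonneg fun i hi => ?_
          rw [dif_pos (hlt i hi)]; exact singVals_nonneg B _
    _ = (b ^ (m - 1) * b ^ (s - ((m : ℝ) - 1))) *
        ((∏ i ∈ Finset.range (m - 1), if h : i < d then singVals B ⟨i, h⟩ else 1) *
          (if h : m - 1 < d then singVals B ⟨m - 1, h⟩ else 1) ^ (s - ((m : ℝ) - 1))) := by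
        ring
    _ = b ^ s * ((∏ i ∈ Finset.range (m - 1), if h : i < d then singVals B ⟨i, h⟩ else 1) *
          (if h : m - 1 < d then singVals B ⟨m - 1, h⟩ else 1) ^ (s - ((m : ℝ) - 1))) := by
        congr 1
        rw [← Real.rpow_natCast b (m - 1), ← Real.rpow_add hb]
        congr 1
        have : ((m - 1 : ℕ) : ℝ) = (m : ℝ) - 1 := by
          push_cast [Nat.cast_sub hm1]; ring
        rw [this]; ring

lemma mul_svf_le (hd : 0 < d) (B C : Matrix (Fin d) (Fin d) ℝ) {a s : ℝ}
    (ha : 0 < a) (hs : 0 ≤ s)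
    (h : ∀ i, a * singVals B i ≤ singVals C i) :
    a ^ s * svf B s ≤ svf C s := by
  have h' : ∀ i, singVals B i ≤ a⁻¹ * singVals C i := fun i => by
    rw [le_inv_mul_iff₀ ha]; exact h i
  have := svf_le_mul hd C B (by positivity) hs h'
  rw [Real.inv_rpow (le_of_lt ha)] at this
  calc a ^ s * svf B s ≤ a ^ s * ((a ^ s)⁻¹ * svf C s) := by
        refine mul_le_mul_of_nonneg_left this (Real.rpow_nonneg (le_of_lt ha) _)
    _ = svf C s := by
        field_simp
end SvfBounds
section TprodLemmas
variable {M d : ℕ}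

lemma Tprod_foldl (w : List (Fin M)) :
    ∀ (A : List (Fin M) → Fin M → Matrix (Fin d) (Fin d) ℝ) (u : List (Fin M))
      (P : Matrix (Fin d) (Fin d) ℝ),
    w.foldl (fun p i => (p.1 ++ [i], p.2 * A p.1 i)) (u, P) =
      (u ++ w, P * Tprod (fun v => A (u ++ v)) w) := by
  induction w with
  | nil => intro A u P; simp [Tprod]
  | cons i w ih =>
    intro A u P
    rw [List.foldl_cons]
    show (w.foldl (fun p i => (p.1 ++ [i], p.2 * A p.1 i)) (u ++ [i], P * A u i)) = _
    rw [ih A (u ++ [i]) (P * A u i)]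
    have hT : Tprod (fun v => A (u ++ v)) (i :: w) =
        A u i * Tprod (fun v => A ((u ++ [i]) ++ v)) w := by
      show (List.foldl _ (([] : List (Fin M)), (1 : Matrix (Fin d) (Fin d) ℝ)) (i :: w)).2 = _
      rw [List.foldl_cons]
      show (w.foldl (fun p j => (p.1 ++ [j], p.2 * A (u ++ p.1) j))
        (([] : List (Fin M)) ++ [i], 1 * A (u ++ []) i)).2 = _
      simp only [List.nil_append]
      rw [ih (fun v => A (u ++ v)) ([i]) (1 * A (u ++ []) i)]
      simp only [List.append_nil, one_mul]
      congr 1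
      funext v j
      simp [List.append_assoc]
    rw [hT]
    refine Prod.ext ?_ ?_
    · simp
    · simp [mul_assoc]

lemma Tprod_def (A : List (Fin M) → Fin M → Matrix (Fin d) (Fin d) ℝ) (w : List (Fin M)) :
    Tprod A w = (w.foldl (fun p i => (p.1 ++ [i], p.2 * A p.1 i))
      (([] : List (Fin M)), (1 : Matrix (Fin d) (Fin d) ℝ))).2 := rfl

lemma Tprod_append (A : List (Fin M) → Fin M → Matrix (Fin d) (Fin d) ℝ)
    (u w : List (Fin M)) :
    Tprod A (u ++ w) = Tprod A u * Tprod (fun v => A (u ++ v)) w := by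
  rw [Tprod_def, List.foldl_append]
  have h1 := Tprod_foldl u A [] 1
  simp only [List.nil_append, one_mul] at h1
  rw [h1, Tprod_foldl w A u]

lemma Tprod_nil (A : List (Fin M) → Fin M → Matrix (Fin d) (Fin d) ℝ) :
    Tprod A [] = 1 := rfl

lemma Tprod_singleton (A : List (Fin M) → Fin M → Matrix (Fin d) (Fin d) ℝ) (i : Fin M) :
    Tprod A [i] = A [] i := by
  show (1 : Matrix (Fin d) (Fin d) ℝ) * A [] i = A [] i
  rw [one_mul]

lemma Tprod_congr {A B : List (Fin M) → Fin M → Matrix (Fin d) (Fin d) ℝ}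
    (h : ∀ v, A v = B v) (w : List (Fin M)) : Tprod A w = Tprod B w := by
  have : A = B := funext h
  rw [this]

lemma qBounded_Tprod {σl σu : ℝ} (h0 : 0 ≤ σl) (hu0 : 0 ≤ σu)
    (A : List (Fin M) → Fin M → Matrix (Fin d) (Fin d) ℝ)
    (hA : ∀ w i j, σl ≤ singVals (A w i) j ∧ singVals (A w i) j ≤ σu)
    (w : List (Fin M)) :
    QBounded (Tprod A w) (σl ^ w.length) (σu ^ w.length) := by
  induction w using List.reverseRecOn with
  | nil => simpa [Tprod_nil] using QBounded.one
  | append_singleton w i ih =>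
    have hfac : Tprod A (w ++ [i]) = Tprod A w * A w i := by
      rw [Tprod_append, Tprod_singleton]
      simp
    rw [hfac]
    have := QBounded.mul ih (qBounded_of_singVals (A w i) h0 hu0 (hA w i))
      (pow_nonneg h0 _) hu0
    simpa [pow_succ] using this
end TprodLemmas
section StageLemmas
variable {M d : ℕ}

lemma stage_le (ω : CodeTree M d) (s : ℝ) (j : ℕ) (E : Set (ℕ → Fin M))
    (J : Set (List (Fin M))) (h1 : ∀ w ∈ J, ω.alive w ∧ j ≤ w.length)
    (h2 : E ⊆ ⋃ w ∈ J, cyl w) :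
    stage ω s j E ≤ ∑' w : J, ENNReal.ofReal (svf (Tprod ω.A w) s) :=
  iInf_le_of_le J (iInf_le_of_le h1 (iInf_le_of_le h2 le_rfl))

lemma stage_mono (ω : CodeTree M d) (s : ℝ) (E : Set (ℕ → Fin M)) {j j' : ℕ}
    (h : j ≤ j') : stage ω s j E ≤ stage ω s j' E := by
  refine le_iInf fun J => le_iInf fun h1 => le_iInf fun h2 => ?_
  exact stage_le ω s j E J (fun w hw => ⟨(h1 w hw).1, le_trans h (h1 w hw).2⟩) h2

end StageLemmas
/-- For a code tree `ω` with first neck level `N 1`, at most `M` maps at each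
node and singular values in `[σl, σu] ⊂ (0,1)`:
`(σl^s)^{N 1} M^s_n(Σ^{Ξω}) ≤ M^s_{N 1 + n}(Σ^ω) ≤ (M σu^s)^{N 1} M^s_n(Σ^{Ξω})`
for all `s ≥ 0` and `n`; consequently `M^s(Σ^ω) > 0 ↔ M^s(Σ^{Ξω}) > 0`, i.e.
the set `E(s) = {ω : M^s(Σ^ω) > 0}` is shift invariant. -/
theorem statement9 {M d : ℕ} (hd : 0 < d) (hM : 0 < M)
    (ω ω' : CodeTree M d) (hshift : IsShiftOf ω' ω)
    (σl σu : ℝ) (h0 : 0 < σl) (hlu : σl ≤ σu) (hu : σu < 1)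
    (hσ : ∀ w i j, σl ≤ singVals (ω.A w i) j ∧ singVals (ω.A w i) j ≤ σu)
    (hinv : ∀ w i, IsUnit (ω.A w i).det)
    (s : ℝ) (hs : 0 ≤ s) :
    (∀ n : ℕ,
      ENNReal.ofReal (σl ^ s) ^ (ω.N 1) * stage ω' s n (codeSpace ω') ≤
        stage ω s (ω.N 1 + n) (codeSpace ω) ∧
      stage ω s (ω.N 1 + n) (codeSpace ω) ≤
        ENNReal.ofReal ((M : ℝ) * σu ^ s) ^ (ω.N 1) *
          stage ω' s n (codeSpace ω')) ∧
    (0 < netM ω s ↔ 0 < netM ω' s) := by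
  classical
  obtain ⟨hNs, w0, hw0a, hw0l, hAlive, hA⟩ := hshift
  set N := ω.N 1 with hN
  have hσu0 : 0 < σu := lt_of_lt_of_le h0 hlu
  have neck1 : ∀ w, ω.alive w → w.length = N → ∀ v,
      (ω.alive (w ++ v) ↔ ω'.alive v) ∧ ω.A (w ++ v) = ω'.A v := by
    intro w hw hl v
    have h := ω.neck 1 le_rfl w w0 hw hw0a hl hw0l v
    exact ⟨by rw [h.1, ← hAlive v], by rw [h.2, ← hA v]⟩
  have alive_prefix : ∀ (v w : List (Fin M)), ω.alive (w ++ v) → ω.alive w := by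
    intro v
    induction v using List.reverseRecOn with
    | nil => intro w h; simpa using h
    | append_singleton v i ih =>
      intro w h
      exact ih w (ω.alive_pre (w ++ v) i (by rwa [← List.append_assoc] at h))
  -- per-word svf bounds
  have hword : ∀ u : List (Fin M), ω.alive u → N ≤ u.length →
      ENNReal.ofReal (svf (Tprod ω.A u) s) ≤
        ENNReal.ofReal (σu ^ s) ^ N * ENNReal.ofReal (svf (Tprod ω'.A (u.drop N)) s) ∧
      ENNReal.ofReal (σl ^ s) ^ N * ENNReal.ofReal (svf (Tprod ω'.A (u.drop N)) s) ≤
        ENNReal.ofReal (svf (Tprod ω.A u) s) := by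
    intro u hu hlen
    have htl : (u.take N).length = N := by
      rw [List.length_take]; omega
    have hta : ω.alive (u.take N) :=
      alive_prefix (u.drop N) (u.take N) (by rw [List.take_append_drop]; exact hu)
    have hfac : Tprod ω.A u = Tprod ω.A (u.take N) * Tprod ω'.A (u.drop N) := by
      conv_lhs => rw [← List.take_append_drop N u]
      rw [Tprod_append]
      congr 1
      exact Tprod_congr (fun v => (neck1 (u.take N) hta htl v).2) _
    have hQ : QBounded (Tprod ω.A (u.take N)) (σl ^ N) (σu ^ N) := by
      have := qBounded_Tprod h0.le hσu0.le ω.A hσ (u.take N)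
      rwa [htl] at this
    set B := Tprod ω'.A (u.drop N) with hB
    set Tw := Tprod ω.A (u.take N) with hTw
    have hup : ∀ i, singVals (Tw * B) i ≤ σu ^ N * singVals B i := by
      refine singVals_le_of_quad B (Tw * B) (σu ^ N) (by positivity) (fun x => ?_)
      rw [← Matrix.mulVec_mulVec]
      exact (hQ (B.mulVec x)).2
    have hlo : ∀ i, σl ^ N * singVals B i ≤ singVals (Tw * B) i := by
      refine le_singVals_of_quad B (Tw * B) (σl ^ N) (by positivity) (fun x => ?_)
      rw [← Matrix.mulVec_mulVec]
      exact (hQ (B.mulVec x)).1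
    have hpowu : ((σu ^ N : ℝ)) ^ s = (σu ^ s) ^ N := by
      rw [← Real.rpow_natCast σu N, ← Real.rpow_mul hσu0.le,
        ← Real.rpow_natCast (σu ^ s) N, ← Real.rpow_mul hσu0.le, mul_comm]
    have hpowl : ((σl ^ N : ℝ)) ^ s = (σl ^ s) ^ N := by
      rw [← Real.rpow_natCast σl N, ← Real.rpow_mul h0.le,
        ← Real.rpow_natCast (σl ^ s) N, ← Real.rpow_mul h0.le, mul_comm]
    have hsv_up : svf (Tw * B) s ≤ (σu ^ s) ^ N * svf B s := by
      have h1 := svf_le_mul hd B (Tw * B) (by positivity : (0:ℝ) < σu ^ N) hs hup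
      rwa [hpowu] at h1
    have hsv_lo : (σl ^ s) ^ N * svf B s ≤ svf (Tw * B) s := by
      have h1 := mul_svf_le hd B (Tw * B) (by positivity : (0:ℝ) < σl ^ N) hs hlo
      rwa [hpowl] at h1
    constructor
    · rw [hfac]
      calc ENNReal.ofReal (svf (Tw * B) s)
          ≤ ENNReal.ofReal ((σu ^ s) ^ N * svf B s) := ENNReal.ofReal_le_ofReal hsv_up
        _ = ENNReal.ofReal ((σu ^ s) ^ N) * ENNReal.ofReal (svf B s) :=
            ENNReal.ofReal_mul (by positivity)
        _ = ENNReal.ofReal (σu ^ s) ^ N * ENNReal.ofReal (svf B s) := by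
            rw [ENNReal.ofReal_pow (by positivity)]
    · rw [hfac]
      calc ENNReal.ofReal (σl ^ s) ^ N * ENNReal.ofReal (svf B s)
          = ENNReal.ofReal ((σl ^ s) ^ N * svf B s) := by
            rw [ENNReal.ofReal_mul (by positivity), ENNReal.ofReal_pow (by positivity)]
        _ ≤ ENNReal.ofReal (svf (Tw * B) s) := ENNReal.ofReal_le_ofReal hsv_lo
  -- splitting of ofFn words
  have hofFn : ∀ (x : ℕ → Fin M) (k : ℕ), List.ofFn (fun i : Fin (N + k) => x i) =
      (List.ofFn fun i : Fin N => x i) ++ List.ofFn (fun i : Fin k => x (N + i)) := by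
    intro x k
    rw [List.ofFn_add]
    congr 1
    all_goals exact congrArg _ (funext fun i => by simp)
  have hMR : (0:ℝ) < (M:ℝ) := by exact_mod_cast hM
  have hC0 : ENNReal.ofReal ((M : ℝ) * σu ^ s) ≠ 0 := by
    refine ne_of_gt (ENNReal.ofReal_pos.2 ?_)
    have : (0:ℝ) < σu ^ s := Real.rpow_pos_of_pos hσu0 s
    positivity
  have hCrw : ENNReal.ofReal ((M : ℝ) * σu ^ s) =
      (M : ENNReal) * ENNReal.ofReal (σu ^ s) := by
    rw [ENNReal.ofReal_mul (le_of_lt hMR), ENNReal.ofReal_natCast]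
  -- upper bound
  have upper : ∀ n : ℕ, stage ω s (N + n) (codeSpace ω) ≤
      ENNReal.ofReal ((M : ℝ) * σu ^ s) ^ N * stage ω' s n (codeSpace ω') := by
    intro n
    have main : ∀ J' : Set (List (Fin M)), (∀ v ∈ J', ω'.alive v ∧ n ≤ v.length) →
        (codeSpace ω' ⊆ ⋃ v ∈ J', cyl v) →
        stage ω s (N + n) (codeSpace ω) ≤
          ENNReal.ofReal ((M : ℝ) * σu ^ s) ^ N *
            ∑' v : J', ENNReal.ofReal (svf (Tprod ω'.A v) s) := by
      intro J' h1 h2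
      set Jset : Set (List (Fin M)) :=
        {u | ∃ w, (ω.alive w ∧ w.length = N) ∧ ∃ v ∈ J', u = w ++ v} with hJset
      have hJmem : ∀ u : Jset, ω.alive ↑u ∧ N + n ≤ (↑u : List (Fin M)).length ∧
          ((↑u : List (Fin M)).drop N) ∈ J' := by
        rintro ⟨u, w, ⟨hwa, hwl⟩, v, hv, rfl⟩
        refine ⟨(neck1 w hwa hwl v).1.2 (h1 v hv).1, ?_, ?_⟩
        · rw [List.length_append, hwl]
          exact Nat.add_le_add_left (h1 v hv).2 N
        · show (w ++ v).drop N ∈ J'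
          rw [← hwl, List.drop_left]
          exact hv
      have hadm : ∀ u ∈ Jset, ω.alive u ∧ N + n ≤ u.length := fun u hu =>
        ⟨(hJmem ⟨u, hu⟩).1, (hJmem ⟨u, hu⟩).2.1⟩
      have hcov : codeSpace ω ⊆ ⋃ u ∈ Jset, cyl u := by
        intro x hx
        set w : List (Fin M) := List.ofFn (fun k : Fin N => x k) with hw
        have hwl : w.length = N := by simp [hw]
        have hwa : ω.alive w := hx N
        have hy : (fun k => x (N + k)) ∈ codeSpace ω' := by
          intro k
          refine (neck1 w hwa hwl _).1.1 ?_
          rw [← hofFn x k]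
          exact hx (N + k)
        obtain ⟨v, hvJ, hyv⟩ := Set.mem_iUnion₂.1 (h2 hy)
        refine Set.mem_iUnion₂.2 ⟨w ++ v, ⟨w, ⟨hwa, hwl⟩, v, hvJ, rfl⟩, ?_⟩
        intro k hk
        rw [List.get_eq_getElem]
        rcases lt_or_ge k N with hkN | hkN
        · rw [List.getElem_append_left (by omega : k < w.length)]
          simp only [hw, List.getElem_ofFn]
        · rw [List.getElem_append_right (by omega : w.length ≤ k)]
          have hkv : k - w.length < v.length := by
            have := hk; rw [List.length_append] at this; omega
          have := hyv (k - w.length) (by omega)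
          rw [List.get_eq_getElem] at this
          rw [← this, hwl]
          congr 1
          omega
      set φK : ENNReal := ENNReal.ofReal (σu ^ s) ^ N with hφK
      set ψ : (Fin N → Fin M) × J' → ENNReal :=
        fun p => φK * ENNReal.ofReal (svf (Tprod ω'.A ↑p.2) s) with hψ
      have hNleu : ∀ u : Jset, N ≤ (↑u : List (Fin M)).length := fun u =>
        le_trans (Nat.le_add_right N n) (hJmem u).2.1
      set ι : Jset → (Fin N → Fin M) × J' := fun u =>
        (fun i => (↑u : List (Fin M)).get ⟨(i : ℕ), lt_of_lt_of_le i.isLt (hNleu u)⟩,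
         ⟨(↑u : List (Fin M)).drop N, (hJmem u).2.2⟩) with hι
      have hιinj : Function.Injective ι := by
        intro u1 u2 h
        have h1' := congrArg Prod.fst h
        have h2' := congrArg (fun p => ((p.2 : List (Fin M))) ) h
        simp only [hι] at h1' h2'
        have hlen : (↑u1 : List (Fin M)).length = (↑u2 : List (Fin M)).length := by
          have l1 := List.length_drop (i := N) (l := (↑u1 : List (Fin M)))
          have l2 := List.length_drop (i := N) (l := (↑u2 : List (Fin M)))
          have hdl := congrArg List.length h2'
          have n1 := hNleu u1; have n2 := hNleu u2
          simp only [List.length_drop] at hdl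
          omega
        apply Subtype.ext
        apply List.ext_getElem hlen
        intro k hk1 hk2
        rcases lt_or_ge k N with hkN | hkN
        · have := congrFun h1' ⟨k, hkN⟩
          simpa [List.get_eq_getElem] using this
        · have e1 := List.getElem?_drop (xs := (↑u1 : List (Fin M))) (i := N) (j := k - N)
          have e2 := List.getElem?_drop (xs := (↑u2 : List (Fin M))) (i := N) (j := k - N)
          have hNk : N + (k - N) = k := by omega
          rw [hNk] at e1 e2
          have : (↑u1 : List (Fin M))[k]? = (↑u2 : List (Fin M))[k]? := by
            rw [← e1, ← e2, h2']
          rw [List.getElem?_eq_getElem hk1, List.getElem?_eq_getElem hk2] at this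
          exact Option.some.inj this
      calc stage ω s (N + n) (codeSpace ω)
          ≤ ∑' u : Jset, ENNReal.ofReal (svf (Tprod ω.A ↑u) s) :=
            stage_le ω s (N + n) (codeSpace ω) Jset hadm hcov
        _ ≤ ∑' u : Jset, ψ (ι u) := by
            refine ENNReal.tsum_le_tsum fun u => ?_
            exact (hword ↑u (hJmem u).1 (hNleu u)).1
        _ ≤ ∑' p, ψ p := ENNReal.tsum_comp_le_tsum_of_injective hιinj ψ
        _ = ∑' (q : Fin N → Fin M), ∑' (v : J'),
              φK * ENNReal.ofReal (svf (Tprod ω'.A ↑v) s) := ENNReal.tsum_prod'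
        _ = ∑' (_ : Fin N → Fin M),
              (φK * ∑' v : J', ENNReal.ofReal (svf (Tprod ω'.A ↑v) s)) := by
            congr 1
            funext q
            exact ENNReal.tsum_mul_left
        _ = (Fintype.card (Fin N → Fin M) : ENNReal) *
              (φK * ∑' v : J', ENNReal.ofReal (svf (Tprod ω'.A ↑v) s)) := by
            rw [tsum_fintype]
            simp [Finset.card_univ, nsmul_eq_mul]
        _ = ENNReal.ofReal ((M : ℝ) * σu ^ s) ^ N *
              ∑' v : J', ENNReal.ofReal (svf (Tprod ω'.A ↑v) s) := by
            rw [Fintype.card_fun, Fintype.card_fin, Fintype.card_fin, hCrw, mul_pow]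
            push_cast
            ring
    -- conclude by taking the infimum over covers J'
    have hdiv : stage ω s (N + n) (codeSpace ω) / ENNReal.ofReal ((M : ℝ) * σu ^ s) ^ N ≤
        stage ω' s n (codeSpace ω') := by
      rw [stage]
      refine le_iInf fun J' => le_iInf fun h1 => le_iInf fun h2 => ?_
      rw [ENNReal.div_le_iff_le_mul (Or.inl (pow_ne_zero _ hC0))
        (Or.inl (ENNReal.pow_ne_top ENNReal.ofReal_ne_top))]
      rw [mul_comm]
      exact main J' h1 h2
    have := (ENNReal.div_le_iff_le_mul (Or.inl (pow_ne_zero _ hC0))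
        (Or.inl (ENNReal.pow_ne_top ENNReal.ofReal_ne_top))).1 hdiv
    rwa [mul_comm] at this
  -- lower bound
  have lower : ∀ n : ℕ, ENNReal.ofReal (σl ^ s) ^ N * stage ω' s n (codeSpace ω') ≤
      stage ω s (N + n) (codeSpace ω) := by
    intro n
    refine le_iInf fun J => le_iInf fun h1 => le_iInf fun h2 => ?_
    set J'set : Set (List (Fin M)) := (fun w => w.drop N) '' J with hJ'set
    have htakefacts : ∀ w, w ∈ J → ω.alive (w.take N) ∧ (w.take N).length = N := by
      intro w hw
      have hlw := (h1 w hw).2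
      constructor
      · exact alive_prefix (w.drop N) (w.take N)
          (by rw [List.take_append_drop]; exact (h1 w hw).1)
      · rw [List.length_take]; omega
    have hdropalive : ∀ w, w ∈ J → ω'.alive (w.drop N) := by
      intro w hw
      have h := (neck1 (w.take N) (htakefacts w hw).1 (htakefacts w hw).2 (w.drop N)).1
      exact h.1 (by rw [List.take_append_drop]; exact (h1 w hw).1)
    have hadm' : ∀ v ∈ J'set, ω'.alive v ∧ n ≤ v.length := by
      rintro v ⟨w, hw, rfl⟩
      refine ⟨hdropalive w hw, ?_⟩
      rw [List.length_drop]
      have := (h1 w hw).2; omega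
    have hcov' : codeSpace ω' ⊆ ⋃ v ∈ J'set, cyl v := by
      intro y hy
      set x : ℕ → Fin M :=
        fun k => if h : k < N then w0.get ⟨k, by omega⟩ else y (k - N) with hx
      have hxcode : x ∈ codeSpace ω := by
        intro m
        rcases le_or_gt m N with hmN | hmN
        · have heq : List.ofFn (fun k : Fin m => x k) = w0.take m := by
            apply List.ext_getElem
            · rw [List.length_ofFn, List.length_take]; omega
            · intro k hk1 hk2
              rw [List.length_ofFn] at hk1
              have hkN : k < N := by omega
              simp only [List.getElem_ofFn, hx]
              rw [dif_pos hkN, List.get_eq_getElem]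
              show w0[k]'(by omega) = (List.take m w0)[k]'hk2
              exact List.getElem_take' (by omega) (by omega)
          rw [heq]
          exact alive_prefix (w0.drop m) (w0.take m)
            (by rw [List.take_append_drop]; exact hw0a)
        · obtain ⟨k, rfl⟩ : ∃ k, m = N + k := ⟨m - N, by omega⟩
          rw [hofFn x k]
          have he1 : (List.ofFn fun i : Fin N => x ↑i) = w0 := by
            apply List.ext_getElem
            · rw [List.length_ofFn]; omega
            · intro j hj1 hj2
              rw [List.length_ofFn] at hj1
              simp only [List.getElem_ofFn, hx]
              rw [dif_pos hj1, List.get_eq_getElem]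
          have he2 : (List.ofFn fun i : Fin k => x (N + ↑i)) =
              List.ofFn (fun i : Fin k => y ↑i) := by
            congr 1
            funext i
            simp only [hx]
            rw [dif_neg (by omega)]
            congr 1
            omega
          rw [he1, he2]
          exact (hAlive _).1 (hy k)
      obtain ⟨w, hwJ, hxw⟩ := Set.mem_iUnion₂.1 (h2 hxcode)
      refine Set.mem_iUnion₂.2 ⟨w.drop N, ⟨w, hwJ, rfl⟩, ?_⟩
      intro k hk
      have hlw := (h1 w hwJ).2
      have hkd : k < (w.drop N).length := hk
      rw [List.length_drop] at hkd
      have hkw : N + k < w.length := by omega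
      rw [List.get_eq_getElem]
      have hval : (w.drop N)[k]? = w[N+k]? := List.getElem?_drop (xs := w) (i := N) (j := k)
      rw [List.getElem?_eq_getElem hk, List.getElem?_eq_getElem hkw] at hval
      have hx1 : x (N + k) = w[N + k] := by
        have := hxw (N + k) hkw
        rwa [List.get_eq_getElem] at this
      have hx2 : x (N + k) = y k := by
        simp only [hx]
        rw [dif_neg (by omega)]
        congr 1
        omega
      rw [Option.some.inj hval, ← hx1, hx2]
    have hsec : ∀ v : J'set, ∃ w : J, ((w : List (Fin M)).drop N) = ↑v := by
      rintro ⟨v, w, hw, rfl⟩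
      exact ⟨⟨w, hw⟩, rfl⟩
    choose g hg using hsec
    have hginj : Function.Injective g := by
      intro v1 v2 h
      apply Subtype.ext
      rw [← hg v1, ← hg v2, h]
    calc ENNReal.ofReal (σl ^ s) ^ N * stage ω' s n (codeSpace ω')
        ≤ ENNReal.ofReal (σl ^ s) ^ N *
            ∑' v : J'set, ENNReal.ofReal (svf (Tprod ω'.A ↑v) s) :=
          mul_le_mul_right (stage_le ω' s n (codeSpace ω') J'set hadm' hcov') _
      _ = ∑' v : J'set,
            ENNReal.ofReal (σl ^ s) ^ N * ENNReal.ofReal (svf (Tprod ω'.A ↑v) s) :=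
          ENNReal.tsum_mul_left.symm
      _ ≤ ∑' v : J'set, ENNReal.ofReal (svf (Tprod ω.A ↑(g v)) s) := by
          refine ENNReal.tsum_le_tsum fun v => ?_
          have hw := h1 ↑(g v) (g v).2
          have hh := (hword ↑(g v) hw.1 (le_trans (Nat.le_add_right N n) hw.2)).2
          rwa [hg v] at hh
      _ ≤ ∑' w : J, ENNReal.ofReal (svf (Tprod ω.A ↑w) s) :=
          ENNReal.tsum_comp_le_tsum_of_injective hginj _
  -- conclusion
  refine ⟨fun n => ⟨lower n, upper n⟩, ?_⟩
  have hCl0 : (ENNReal.ofReal (σl ^ s)) ≠ 0 :=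
    ne_of_gt (ENNReal.ofReal_pos.2 (Real.rpow_pos_of_pos h0 s))
  constructor
  · intro hpos
    have hex : ∃ j, stage ω s j (codeSpace ω) ≠ 0 := by
      by_contra hcon
      push_neg at hcon
      have : netM ω s = 0 := by
        rw [netM]
        simp [hcon]
      exact absurd this (ne_of_gt hpos)
    obtain ⟨j, hj⟩ := hex
    have hmono := stage_mono ω s (codeSpace ω) (Nat.le_add_left j N)
    have hj2 : stage ω s (N + j) (codeSpace ω) ≠ 0 := by
      intro h
      exact hj (le_antisymm (h ▸ hmono) zero_le)
    have hup := upper j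
    have hne : stage ω' s j (codeSpace ω') ≠ 0 := by
      intro h
      rw [h, mul_zero] at hup
      exact hj2 (le_antisymm hup zero_le)
    calc (0:ENNReal) < stage ω' s j (codeSpace ω') := pos_iff_ne_zero.2 hne
      _ ≤ netM ω' s := le_iSup (fun j => stage ω' s j (codeSpace ω')) j
  · intro hpos
    have hex : ∃ j, stage ω' s j (codeSpace ω') ≠ 0 := by
      by_contra hcon
      push_neg at hcon
      have : netM ω' s = 0 := by
        rw [netM]
        simp [hcon]
      exact absurd this (ne_of_gt hpos)
    obtain ⟨n, hn⟩ := hex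
    have hlo := lower n
    have hpos2 : (0:ENNReal) < ENNReal.ofReal (σl ^ s) ^ N * stage ω' s n (codeSpace ω') :=
      ENNReal.mul_pos (pow_ne_zero N hCl0) hn
    calc (0:ENNReal) < ENNReal.ofReal (σl ^ s) ^ N * stage ω' s n (codeSpace ω') := hpos2
      _ ≤ stage ω s (N + n) (codeSpace ω) := hlo
      _ ≤ netM ω s := le_iSup (fun j => stage ω s j (codeSpace ω)) (N + n)
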